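/- Let X be a real Hilbert space, T x = Q x + π an affine map with Q bounded self-adjoint positive, ‖Q‖ ≤ 1, and Fix T nonempty, with U the positive square root of Id − Q. Let f : X → ℝ be convex Fréchet-differentiable with gradient ∇f and g : X → (−∞,∞] proper convex lower-semicontinuous with subdifferential ∂g. Then x* ∈ Fix T solves the variational inequality VIP(∇f + ∂g, Fix T) — i.e., there exists ξ* ∈ ∂g(x*) with ⟪y − x*, ∇f(x*) + ξ*⟫ ≥ 0 for all y ∈ Fix T — if and only if x* ∈ Fix T and (∇f(x*) + ∂g(x*)) ∩ closure(range U) ≠ ∅. -/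

import Mathlib

open scoped InnerProductSpace

/-- The subdifferential of a function `g : X → (−∞, +∞]`. -/
def subdiff {X : Type*} [NormedAddCommGroup X] [InnerProductSpace ℝ X]
    (g : X → EReal) (x : X) : Set X :=
  {ξ : X | ∀ x' : X, g x + ((⟪x' - x, ξ⟫_ℝ : ℝ) : EReal) ≤ g x'}

/-- `x*` solves `VIP(∇f + ∂g, Fix T)`: `x* ∈ Fix T` and there is `ξ* ∈ ∂g(x*)` with
`⟪y − x*, ∇f(x*) + ξ*⟫ ≥ 0` for all `y ∈ Fix T`. -/
def solvesVIP {X : Type*} [NormedAddCommGroup X] [InnerProductSpace ℝ X]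
    (f' : X → X) (g : X → EReal) (T : X → X) (xs : X) : Prop :=
  T xs = xs ∧ ∃ ξ ∈ subdiff g xs, ∀ y : X, T y = y → 0 ≤ ⟪y - xs, f' xs + ξ⟫_ℝ

/-- Characterization of solutions of `VIP(∇f + ∂g, Fix T)` via the closure of the range of the
square root `U` of `Id − Q`. -/
theorem stmt8 {X : Type*} [NormedAddCommGroup X] [InnerProductSpace ℝ X] [CompleteSpace X]
    (Q : X →L[ℝ] X) (hsa : ∀ x y : X, ⟪Q x, y⟫_ℝ = ⟪x, Q y⟫_ℝ)
    (hpos : ∀ x : X, 0 ≤ ⟪Q x, x⟫_ℝ) (hnorm : ‖Q‖ ≤ 1)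
    (U : X →L[ℝ] X) (hUsa : ∀ x y : X, ⟪U x, y⟫_ℝ = ⟪x, U y⟫_ℝ)
    (hUpos : ∀ x : X, 0 ≤ ⟪U x, x⟫_ℝ) (hU2 : U.comp U = 1 - Q)
    (p : X) (T : X → X) (hT : ∀ x, T x = Q x + p) (hfix : ∃ w, T w = w)
    (f : X → ℝ) (hf : ConvexOn ℝ Set.univ f) (f' : X → X)
    (hf' : ∀ x, HasGradientAt f (f' x) x)
    (g : X → EReal) (hgproper : (∀ x, g x ≠ ⊥) ∧ ∃ x, g x ≠ ⊤)
    (hglsc : LowerSemicontinuous g)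
    (hgconvex : ∀ x y : X, ∀ θ : ℝ, 0 ≤ θ → θ ≤ 1 →
      g (θ • x + (1 - θ) • y) ≤ (θ : EReal) * g x + ((1 - θ : ℝ) : EReal) * g y)
    (xs : X) :
    solvesVIP f' g T xs ↔
      (T xs = xs ∧ ∃ ξ ∈ subdiff g xs, f' xs + ξ ∈ closure (Set.range U)) := by
  -- `ker U = {z | Q z = z}`
  have hker : ∀ z : X, U z = 0 ↔ Q z = z := by
    intro z
    have hU2z : U (U z) = z - Q z := by
      have := congrArg (fun A : X →L[ℝ] X => A z) hU2
      simpa using this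
    constructor
    · intro h
      have h0 : (0 : X) = z - Q z := by rw [← hU2z, h, map_zero]
      have := sub_eq_zero.mp h0.symm
      exact this.symm
    · intro h
      have h2 : U (U z) = 0 := by rw [hU2z, h, sub_self]
      have hn : ⟪U z, U z⟫_ℝ = 0 := by rw [hUsa z (U z), h2, inner_zero_right]
      exact inner_self_eq_zero.mp hn
  -- closure of the range of `U` equals the orthogonal complement of `ker U`
  have hcl : closure (Set.range U) = ((LinearMap.ker (U : X →ₗ[ℝ] X) : Submodule ℝ X)ᗮ : Set X) := by
    have hro : (LinearMap.range (U : X →ₗ[ℝ] X) : Submodule ℝ X)ᗮ = LinearMap.ker (U : X →ₗ[ℝ] X) := by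
      ext z
      simp only [Submodule.mem_orthogonal, LinearMap.mem_range, LinearMap.mem_ker,
        ContinuousLinearMap.coe_coe]
      constructor
      · intro h
        have := h (U (U z)) ⟨U z, rfl⟩
        rw [hUsa (U z) z] at this
        exact inner_self_eq_zero.mp this
      · rintro h u ⟨x, rfl⟩
        rw [hUsa x z, h, inner_zero_right]
    have hcc : ((LinearMap.range (U : X →ₗ[ℝ] X) : Submodule ℝ X)ᗮᗮ : Set X) = closure (Set.range U) := by
      rw [Submodule.orthogonal_orthogonal_eq_closure, Submodule.topologicalClosure_coe,
        LinearMap.coe_range, ContinuousLinearMap.coe_coe]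
    rw [← hcc, hro]
  constructor
  · rintro ⟨hfx, ξ, hξ, hvip⟩
    refine ⟨hfx, ξ, hξ, ?_⟩
    rw [hcl, SetLike.mem_coe, Submodule.mem_orthogonal]
    intro z hz
    have hQz : Q z = z := (hker z).mp hz
    have hQxs : Q xs + p = xs := by rw [← hT]; exact hfx
    have hfix1 : T (xs + z) = xs + z := by
      rw [hT, map_add, hQz, add_right_comm, hQxs]
    have hfix2 : T (xs - z) = xs - z := by
      rw [hT, map_sub, hQz, sub_add_eq_add_sub, hQxs]
    have h1 := hvip (xs + z) hfix1
    have h2 := hvip (xs - z) hfix2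
    rw [add_sub_cancel_left] at h1
    rw [sub_sub_cancel_left, inner_neg_left] at h2
    linarith
  · rintro ⟨hfx, ξ, hξ, hmem⟩
    refine ⟨hfx, ξ, hξ, ?_⟩
    intro y hy
    rw [hcl, SetLike.mem_coe, Submodule.mem_orthogonal] at hmem
    have hQxs : Q xs = xs - p := eq_sub_of_add_eq (by rw [← hT]; exact hfx)
    have hQy : Q y = y - p := eq_sub_of_add_eq (by rw [← hT]; exact hy)
    have hzker : U (y - xs) = 0 := by
      apply (hker _).mpr
      rw [map_sub, hQy, hQxs, sub_sub_sub_cancel_right]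
    rw [hmem (y - xs) hzker]
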